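/- In the multi-attribute NNS setting with smoothing constant η = 1 and |P| ≥ k, consider any greedy chain ∅ = S_0 ⊆ S_1 ⊆ … ⊆ S_k where, for each i ∈ {1,…,k}, S_i = S_{i−1} ∪ {v_i} with v_i ∈ P ∖ S_{i−1} maximizing f(S_{i−1} ∪ {v}) over all v ∈ P ∖ S_{i−1}. Then f(S_k) ≥ (1 − 1/e) · max_{T ⊆ P, |T| = k} f(T), where f(S) = (1/c) ∑_{ℓ=1}^c log(1 + u_ℓ(S)). -/

import Mathlib

lemma log_step (a x y : ℝ) (ha : 0 ≤ a) (hx : 0 ≤ x) (hy : 0 ≤ y) :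
    Real.log (1 + (a + (x + y))) - Real.log (1 + (a + x)) ≤
      Real.log (1 + (a + y)) - Real.log (1 + a) := by
  have h1 : (0:ℝ) < 1 + a := by linarith
  have h2 : (0:ℝ) < 1 + (a + x) := by linarith
  have h3 : (0:ℝ) < 1 + (a + y) := by linarith
  have h4 : (0:ℝ) < 1 + (a + (x + y)) := by linarith
  rw [sub_le_sub_iff, ← Real.log_mul h4.ne' h1.ne', ← Real.log_mul h3.ne' h2.ne']
  exact Real.log_le_log (by positivity) (by nlinarith)

lemma log_sum {V : Type*} [DecidableEq V] (a : ℝ) (ha : 0 ≤ a) (F : Finset V)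
    (x : V → ℝ) (hx : ∀ w ∈ F, 0 ≤ x w) :
    Real.log (1 + (a + ∑ w ∈ F, x w)) ≤
      Real.log (1 + a) + ∑ w ∈ F, (Real.log (1 + (a + x w)) - Real.log (1 + a)) := by
  induction F using Finset.induction_on with
  | empty => simp
  | @insert w F hw ih =>
    have hxw : 0 ≤ x w := hx w (Finset.mem_insert_self _ _)
    have hxF : ∀ u ∈ F, 0 ≤ x u := fun u hu => hx u (Finset.mem_insert_of_mem hu)
    have hsF : 0 ≤ ∑ u ∈ F, x u := Finset.sum_nonneg hxF
    rw [Finset.sum_insert hw, Finset.sum_insert hw]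
    have h := log_step a (∑ u ∈ F, x u) (x w) ha hsF hxw
    have := ih hxF
    have hcomm : x w + ∑ u ∈ F, x u = ∑ u ∈ F, x u + x w := by ring
    rw [hcomm]
    linarith

/-- `(1 - 1/e)`-approximation guarantee of the greedy MultiNashANN algorithm:
any greedy chain `∅ = S 0 ⊆ S 1 ⊆ … ⊆ S k`, where at each step the vector
maximizing the resulting value of `f(S) = (1/c) ∑ ℓ, log (1 + u_ℓ(S))` is
added, satisfies `f (S k) ≥ (1 - 1/e) · max_{T ⊆ P, |T| = k} f T`. -/
theorem greedy_multi_nash_guarantee {V : Type*} [DecidableEq V] (c k : ℕ)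
    (hc : 1 ≤ c)
    (P : Finset V) (hPk : k ≤ P.card)
    (atb : V → Finset (Fin c))
    (s : V → ℝ) (hs : ∀ v ∈ P, 0 ≤ s v)
    (f : Finset V → ℝ)
    (hf : ∀ S : Finset V, f S = (1 / (c : ℝ)) * ∑ ℓ : Fin c,
      Real.log (1 + ∑ v ∈ S.filter (fun v => ℓ ∈ atb v), s v))
    (S : ℕ → Finset V) (hS0 : S 0 = ∅)
    (v : ℕ → V)
    (hmem : ∀ i, 1 ≤ i → i ≤ k → v i ∈ P ∧ v i ∉ S (i - 1))
    (hstep : ∀ i, 1 ≤ i → i ≤ k → S i = insert (v i) (S (i - 1)))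
    (hgreedy : ∀ i, 1 ≤ i → i ≤ k → ∀ w ∈ P, w ∉ S (i - 1) →
      f (insert w (S (i - 1))) ≤ f (insert (v i) (S (i - 1))))
    (T : Finset V) (hTP : T ⊆ P) (hTcard : T.card = k) :
    (1 - 1 / Real.exp 1) * f T ≤ f (S k) := by
  set u : Fin c → Finset V → ℝ := fun ℓ A => ∑ v ∈ A.filter (fun v => ℓ ∈ atb v), s v with hu
  have hcpos : (0:ℝ) < (c:ℝ) := by exact_mod_cast hc
  have hcinv : (0:ℝ) ≤ 1 / (c:ℝ) := by positivity
  -- nonnegativity of u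
  have hu0 : ∀ (ℓ : Fin c) (A : Finset V), A ⊆ P → 0 ≤ u ℓ A := by
    intro ℓ A hA
    exact Finset.sum_nonneg fun w hw => hs w (hA (Finset.mem_of_mem_filter _ hw))
  -- monotonicity of f
  have hmono : ∀ A B : Finset V, A ⊆ B → B ⊆ P → f A ≤ f B := by
    intro A B hAB hBP
    rw [hf, hf]
    refine mul_le_mul_of_nonneg_left (Finset.sum_le_sum fun ℓ _ => ?_) hcinv
    have h1 : (0:ℝ) < 1 + u ℓ A := by have := hu0 ℓ A (hAB.trans hBP); linarith
    refine Real.log_le_log h1 (add_le_add le_rfl ?_)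
    exact Finset.sum_le_sum_of_subset_of_nonneg
      (Finset.filter_subset_filter _ hAB)
      (fun w hw _ => hs w (hBP (Finset.mem_of_mem_filter _ hw)))
  -- f of empty set
  have hfempty : f ∅ = 0 := by simp [hf]
  -- submodular inequality
  have hsub : ∀ A T' : Finset V, A ⊆ P → T' ⊆ P →
      f (A ∪ T') ≤ f A + ∑ w ∈ T' \ A, (f (insert w A) - f A) := by
    intro A T' hAP hT'P
    set F := T' \ A with hF
    set x : Fin c → V → ℝ := fun ℓ w => if ℓ ∈ atb w then s w else 0 with hx
    have hxnn : ∀ (ℓ : Fin c), ∀ w ∈ F, 0 ≤ x ℓ w := by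
      intro ℓ w hw
      simp only [hx]
      split
      · exact hs w (hT'P (Finset.mem_sdiff.mp hw).1)
      · exact le_refl 0
    have huunion : ∀ ℓ : Fin c, u ℓ (A ∪ T') = u ℓ A + ∑ w ∈ F, x ℓ w := by
      intro ℓ
      have hAT : A ∪ T' = A ∪ F := (Finset.union_sdiff_self_eq_union).symm
      have hdisj : Disjoint (A.filter (fun v => ℓ ∈ atb v)) (F.filter (fun v => ℓ ∈ atb v)) :=
        (Finset.disjoint_sdiff).mono (Finset.filter_subset _ _) (Finset.filter_subset _ _)
      simp only [hu]
      rw [hAT, Finset.filter_union, Finset.sum_union hdisj]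
      congr 1
      simp [hx, Finset.sum_filter]
    have huinsert : ∀ (ℓ : Fin c) (w : V), w ∉ A → u ℓ (insert w A) = u ℓ A + x ℓ w := by
      intro ℓ w hwA
      simp only [hu, hx, Finset.filter_insert]
      split
      · rw [Finset.sum_insert (fun hmem' => hwA (Finset.mem_of_mem_filter _ hmem'))]
        ring
      · simp
    have key : ∀ ℓ : Fin c, Real.log (1 + u ℓ (A ∪ T')) ≤
        Real.log (1 + u ℓ A) +
          ∑ w ∈ F, (Real.log (1 + u ℓ (insert w A)) - Real.log (1 + u ℓ A)) := by
      intro ℓ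
      have h := log_sum (u ℓ A) (hu0 ℓ A hAP) F (x ℓ) (hxnn ℓ)
      have heq : ∑ w ∈ F, (Real.log (1 + (u ℓ A + x ℓ w)) - Real.log (1 + u ℓ A)) =
          ∑ w ∈ F, (Real.log (1 + u ℓ (insert w A)) - Real.log (1 + u ℓ A)) :=
        Finset.sum_congr rfl fun w hw => by
          rw [huinsert ℓ w (Finset.mem_sdiff.mp hw).2]
      rw [huunion ℓ]
      rw [heq] at h
      exact h
    calc f (A ∪ T') = (1 / (c:ℝ)) * ∑ ℓ : Fin c, Real.log (1 + u ℓ (A ∪ T')) := hf _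
      _ ≤ (1 / (c:ℝ)) * ∑ ℓ : Fin c, (Real.log (1 + u ℓ A) +
            ∑ w ∈ F, (Real.log (1 + u ℓ (insert w A)) - Real.log (1 + u ℓ A))) :=
          mul_le_mul_of_nonneg_left (Finset.sum_le_sum fun ℓ _ => key ℓ) hcinv
      _ = f A + ∑ w ∈ F, (f (insert w A) - f A) := by
          simp only [hf, Finset.sum_add_distrib, mul_add]
          congr 1
          rw [Finset.sum_comm, Finset.mul_sum]
          exact Finset.sum_congr rfl fun w _ => by
            rw [Finset.sum_sub_distrib, mul_sub]
  -- the greedy sets stay in P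
  have hSP : ∀ i, i ≤ k → S i ⊆ P := by
    intro i
    induction i with
    | zero => intro _; rw [hS0]; exact Finset.empty_subset _
    | succ n ih =>
      intro hik
      have h1 : 1 ≤ n + 1 := Nat.succ_le_succ (Nat.zero_le n)
      rw [hstep (n+1) h1 hik]
      simp only [Nat.add_sub_cancel]
      intro y hy
      rcases Finset.mem_insert.mp hy with h | h
      · have := (hmem (n+1) h1 hik).1
        simpa [h] using this
      · exact ih (Nat.le_of_succ_le hik) h
  have hfT0 : 0 ≤ f T := by
    have := hmono ∅ T (Finset.empty_subset _) hTP
    linarith [hfempty]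
  by_cases hk : k = 0
  · subst hk
    have hT : T = ∅ := Finset.card_eq_zero.mp hTcard
    rw [hT, hS0, hfempty]
    simp
  · have hk1 : 1 ≤ k := Nat.one_le_iff_ne_zero.mpr hk
    have hkpos : (0:ℝ) < (k:ℝ) := by exact_mod_cast hk1
    have h1k : 0 ≤ 1 - 1/(k:ℝ) := by
      have : 1/(k:ℝ) ≤ 1 := by
        rw [div_le_one hkpos]; exact_mod_cast hk1
      linarith
    -- the key recurrence
    have hrec : ∀ i, i < k → f T - f (S (i+1)) ≤ (1 - 1/(k:ℝ)) * (f T - f (S i)) := by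
      intro i hik
      have h1 : 1 ≤ i + 1 := Nat.succ_le_succ (Nat.zero_le i)
      have h2 : i + 1 ≤ k := hik
      have hSi : S i ⊆ P := hSP i (le_of_lt hik)
      have hSsucc := hstep (i+1) h1 h2
      simp only [Nat.add_sub_cancel] at hSsucc
      have hSi1P : S (i+1) ⊆ P := hSP (i+1) h2
      have hAin : S i ⊆ S (i+1) := by rw [hSsucc]; exact Finset.subset_insert _ _
      have hΔ0 : f (S i) ≤ f (S (i+1)) := hmono _ _ hAin hSi1P
      have hfTub : f T ≤ f (S i ∪ T) :=
        hmono T _ Finset.subset_union_right (Finset.union_subset hSi hTP)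
      have hsubi := hsub (S i) T hSi hTP
      have hterm : ∀ w ∈ T \ S i, f (insert w (S i)) - f (S i) ≤ f (S (i+1)) - f (S i) := by
        intro w hw
        have hw' := Finset.mem_sdiff.mp hw
        have hg := hgreedy (i+1) h1 h2 w (hTP hw'.1) (by simpa using hw'.2)
        simp only [Nat.add_sub_cancel] at hg
        rw [hSsucc]
        linarith
      have hsumub : ∑ w ∈ T \ S i, (f (insert w (S i)) - f (S i)) ≤
          ((T \ S i).card : ℝ) * (f (S (i+1)) - f (S i)) := by
        calc ∑ w ∈ T \ S i, (f (insert w (S i)) - f (S i))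
            ≤ ∑ _w ∈ T \ S i, (f (S (i+1)) - f (S i)) := Finset.sum_le_sum hterm
          _ = ((T \ S i).card : ℝ) * (f (S (i+1)) - f (S i)) := by
              rw [Finset.sum_const, nsmul_eq_mul]
      have hcard : ((T \ S i).card : ℝ) ≤ (k:ℝ) := by
        have := (Finset.card_le_card (Finset.sdiff_subset (s := T) (t := S i))).trans_eq hTcard
        exact_mod_cast this
      have hchain : f T ≤ f (S i) + (k:ℝ) * (f (S (i+1)) - f (S i)) := by
        have hmm : ((T \ S i).card : ℝ) * (f (S (i+1)) - f (S i)) ≤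
            (k:ℝ) * (f (S (i+1)) - f (S i)) :=
          mul_le_mul_of_nonneg_right hcard (by linarith)
        linarith
      have hdiv : (f T - f (S i)) / (k:ℝ) ≤ f (S (i+1)) - f (S i) := by
        rw [div_le_iff₀ hkpos]
        nlinarith
      have hring : (1 - 1/(k:ℝ)) * (f T - f (S i)) =
          (f T - f (S i)) - (f T - f (S i)) / (k:ℝ) := by
        field_simp
      rw [hring]
      linarith
    -- iterate the recurrence
    have hgeom : ∀ i, i ≤ k → f T - f (S i) ≤ (1 - 1/(k:ℝ))^i * f T := by
      intro i
      induction i with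
      | zero => intro _; simp [hS0, hfempty]
      | succ n ih =>
        intro h
        have hn : n ≤ k := Nat.le_of_succ_le h
        calc f T - f (S (n+1)) ≤ (1 - 1/(k:ℝ)) * (f T - f (S n)) := hrec n h
          _ ≤ (1 - 1/(k:ℝ)) * ((1 - 1/(k:ℝ))^n * f T) :=
              mul_le_mul_of_nonneg_left (ih hn) h1k
          _ = (1 - 1/(k:ℝ))^(n+1) * f T := by ring
    have hbound : (1 - 1/(k:ℝ))^k ≤ 1 / Real.exp 1 := by
      have h2 : 1 - 1/(k:ℝ) ≤ Real.exp (-(1/(k:ℝ))) := by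
        have := Real.add_one_le_exp (-(1/(k:ℝ)))
        linarith
      calc (1 - 1/(k:ℝ))^k ≤ (Real.exp (-(1/(k:ℝ))))^k := pow_le_pow_left₀ h1k h2 k
        _ = Real.exp ((k:ℝ) * (-(1/(k:ℝ)))) := (Real.exp_nat_mul _ k).symm
        _ = Real.exp (-1) := by
            congr 1
            field_simp
        _ = 1 / Real.exp 1 := by rw [Real.exp_neg, one_div]
    have hfin := hgeom k le_rfl
    have hmul : (1 - 1/(k:ℝ))^k * f T ≤ (1 / Real.exp 1) * f T :=
      mul_le_mul_of_nonneg_right hbound hfT0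
    linarith
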